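/- Let (Y,μ_Y) be a probability space, F : Y → Y a measure-preserving map, and τ : Y → {1,2,3,…} measurable with τ ∈ L^2(μ_Y); let τ̄ = ∫_Y τ dμ_Y. Define τ_k(y) = Σ_{j=0}^{k−1} τ(F^j y), the tower Δ = {(y,ℓ) : y ∈ Y, 0 ≤ ℓ < τ(y)} with probability measure μ_Δ given by ∫_Δ g dμ_Δ = τ̄^{−1} ∫_Y Σ_{ℓ=0}^{τ(y)−1} g(y,ℓ) dμ_Y(y), and for n ≥ 1 the lap number N_n(y,ℓ) as the unique nonnegative integer with τ_{N_n}(y) ≤ n + ℓ < τ_{N_n+1}(y). Suppose there is C_0 > 0 such that ‖ max_{0≤j≤n} |τ_j − j τ̄| ‖_{L^2(μ_Y)} ≤ C_0 n^{1/2} for all n ≥ 1. Then there exists C > 0, depending only on C_0, ‖τ‖_{L^2(μ_Y)} and τ̄, such that ∫_Δ max_{1≤k≤n} | N_k − k/τ̄ | dμ_Δ ≤ C n^{1/2} for all n ≥ 1. -/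

import Mathlib

open MeasureTheory
open scoped ENNReal
set_option maxHeartbeats 1000000

/-- `L¹(μ_Δ)` bound for the lap number: if
`‖max_{0≤j≤n} |τ_j − j τ̄|‖_{L²(μ_Y)} ≤ C₀ n^{1/2}`, then
`∫_Δ max_{1≤k≤n} |N_k − k/τ̄| dμ_Δ ≤ C n^{1/2}`, where `μ_Δ` is the tower measure,
given by `∫_Δ g dμ_Δ = τ̄⁻¹ ∫_Y ∑_{ℓ<τ(y)} g(y,ℓ) dμ_Y(y)`. -/
theorem stmt10 {Y : Type*} [MeasurableSpace Y] (μY : Measure Y) [IsProbabilityMeasure μY]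
    (F : Y → Y) (hF : MeasurePreserving F μY μY)
    (τ : Y → ℕ) (hτm : Measurable τ) (hτ1 : ∀ y, 1 ≤ τ y)
    (hτL2 : ∫⁻ y, ((τ y : ℝ≥0∞)) ^ 2 ∂μY < ⊤)
    (τb : ℝ) (hτb : τb = ∫ y, (τ y : ℝ) ∂μY)
    (N : ℕ → Y → ℕ → ℕ)
    (hN : ∀ n : ℕ, 1 ≤ n → ∀ y : Y, ∀ ℓ : ℕ, ℓ < τ y →
      (∑ j ∈ Finset.range (N n y ℓ), τ (F^[j] y)) ≤ n + ℓ ∧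
        n + ℓ < ∑ j ∈ Finset.range (N n y ℓ + 1), τ (F^[j] y))
    (C₀ : ℝ) (hC₀ : 0 < C₀)
    (hL2 : ∀ n : ℕ, 1 ≤ n →
      (∫⁻ y, ENNReal.ofReal
          (((Finset.range (n + 1)).sup' ⟨0, Finset.mem_range.mpr (Nat.succ_pos n)⟩
            (fun j => |(∑ i ∈ Finset.range j, (τ (F^[i] y) : ℝ)) - (j : ℝ) * τb|)) ^ 2) ∂μY)
        ≤ ENNReal.ofReal (C₀ ^ 2 * n)) :
    ∃ C > (0 : ℝ), ∀ n : ℕ, ∀ hn : 1 ≤ n,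
      ENNReal.ofReal τb⁻¹ *
          (∫⁻ y, ENNReal.ofReal
            (∑ ℓ ∈ Finset.range (τ y),
              (Finset.Icc 1 n).sup' (Finset.nonempty_Icc.mpr hn)
                (fun k => |(N k y ℓ : ℝ) - (k : ℝ) / τb|)) ∂μY)
        ≤ ENNReal.ofReal (C * Real.sqrt n) := by
  have hFm : Measurable F := hF.measurable
  have hTm : ∀ j : ℕ, Measurable fun y => (∑ i ∈ Finset.range j, (τ (F^[i] y) : ℝ)) := by
    intro j
    apply Finset.measurable_sum
    intro i _
    exact measurable_from_top.comp (hτm.comp (hFm.iterate i))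
  -- τ is integrable and τb ≥ 1
  have hτle : ∀ y, ((τ y : ℝ≥0∞)) ≤ ((τ y : ℝ≥0∞)) ^ 2 := by
    intro y
    exact le_self_pow (by exact_mod_cast hτ1 y) two_ne_zero
  have hτint : Integrable (fun y => (τ y : ℝ)) μY := by
    refine ⟨(measurable_from_top.comp hτm).aestronglyMeasurable, ?_⟩
    rw [hasFiniteIntegral_iff_norm]
    calc ∫⁻ y, ENNReal.ofReal ‖(τ y : ℝ)‖ ∂μY
        = ∫⁻ y, ((τ y : ℝ≥0∞)) ∂μY := by
          refine lintegral_congr fun y => ?_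
          rw [Real.norm_eq_abs, abs_of_nonneg (by positivity), ENNReal.ofReal_natCast]
      _ ≤ ∫⁻ y, ((τ y : ℝ≥0∞)) ^ 2 ∂μY := lintegral_mono hτle
      _ < ⊤ := hτL2
  have hτb1 : (1 : ℝ) ≤ τb := by
    rw [hτb]
    calc (1 : ℝ) = ∫ _, (1 : ℝ) ∂μY := by simp
      _ ≤ ∫ y, (τ y : ℝ) ∂μY :=
        integral_mono (integrable_const 1) hτint fun y => by simpa using hτ1 y
  have hτbpos : (0 : ℝ) < τb := lt_of_lt_of_le one_pos hτb1
  have hτbinv : τb⁻¹ ≤ 1 := by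
    rw [inv_le_one_iff₀]; right; exact hτb1
  have hτbinv0 : (0 : ℝ) ≤ τb⁻¹ := by positivity
  -- the constant
  set A : ℝ := (∫⁻ y, ((τ y : ℝ≥0∞)) ^ 2 ∂μY).toReal with hAdef
  have hA0 : 0 ≤ A := ENNReal.toReal_nonneg
  have hA : ∫⁻ y, ((τ y : ℝ≥0∞)) ^ 2 ∂μY = ENNReal.ofReal A :=
    (ENNReal.ofReal_toReal hτL2.ne).symm
  refine ⟨Real.sqrt A * (C₀ * Real.sqrt 2) + 2 * A + 1, by positivity, ?_⟩
  intro n hn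
  -- the maximal fluctuation function up to time 2n
  set M : Y → ℝ := fun y =>
    (Finset.range (2 * n + 1)).sup' Finset.nonempty_range_add_one
      (fun j => |(∑ i ∈ Finset.range j, (τ (F^[i] y) : ℝ)) - (j : ℝ) * τb|) with hMdef
  have hMm : Measurable M :=
    Finset.measurable_range_sup'' (fun j _ => ((hTm j).sub measurable_const).abs)
  have hMle : ∀ j, j ≤ 2 * n → ∀ y,
      |(∑ i ∈ Finset.range j, (τ (F^[i] y) : ℝ)) - (j : ℝ) * τb| ≤ M y := by
    intro j hj y
    exact Finset.le_sup'
      (fun j => |(∑ i ∈ Finset.range j, (τ (F^[i] y) : ℝ)) - (j : ℝ) * τb|)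
      (Finset.mem_range.mpr (by omega))
  have hM0 : ∀ y, 0 ≤ M y := by
    intro y
    have := hMle 0 (by omega) y
    simpa using le_trans (abs_nonneg _) this
  -- pointwise bound
  have hpt : ∀ y,
      (∑ ℓ ∈ Finset.range (τ y),
        (Finset.Icc 1 n).sup' (Finset.nonempty_Icc.mpr hn)
          (fun k => |(N k y ℓ : ℝ) - (k : ℝ) / τb|))
      ≤ τb⁻¹ * ((τ y : ℝ) * M y) + 2 * (τ y : ℝ) ^ 2 := by
    intro y
    have ht1 : 1 ≤ τ y := hτ1 y
    have htR : (1 : ℝ) ≤ (τ y : ℝ) := by exact_mod_cast ht1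
    rcases le_or_gt (τ y) n with hcase | hcase
    · -- τ y ≤ n : use the fluctuation bound
      have hterm : ∀ ℓ ∈ Finset.range (τ y),
          (Finset.Icc 1 n).sup' (Finset.nonempty_Icc.mpr hn)
            (fun k => |(N k y ℓ : ℝ) - (k : ℝ) / τb|) ≤ τb⁻¹ * M y + (τ y : ℝ) := by
        intro ℓ hℓ
        rw [Finset.mem_range] at hℓ
        apply Finset.sup'_le
        intro k hk
        rw [Finset.mem_Icc] at hk
        obtain ⟨h1, h2⟩ := hN k hk.1 y ℓ hℓ
        set m := N k y ℓ with hmdef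
        have hmle : m ≤ k + ℓ := by
          calc m = ∑ _j ∈ Finset.range m, 1 := by simp
            _ ≤ ∑ j ∈ Finset.range m, τ (F^[j] y) := Finset.sum_le_sum fun j _ => hτ1 _
            _ ≤ k + ℓ := h1
        have hm2n : m + 1 ≤ 2 * n := by omega
        have hT1 : (∑ i ∈ Finset.range m, (τ (F^[i] y) : ℝ)) ≤ (k : ℝ) + ℓ := by
          exact_mod_cast h1
        have hT2 : (k : ℝ) + ℓ + 1 ≤ ∑ i ∈ Finset.range (m + 1), (τ (F^[i] y) : ℝ) := by
          exact_mod_cast h2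
        have hMa := abs_le.mp (hMle m (by omega) y)
        have hMb := abs_le.mp (hMle (m + 1) hm2n y)
        have hℓR : (ℓ : ℝ) + 1 ≤ (τ y : ℝ) := by exact_mod_cast hℓ
        have hkey : |(m : ℝ) * τb - k| ≤ M y + (τ y : ℝ) * τb := by
          have haux1 : (τ y : ℝ) ≤ (τ y : ℝ) * τb := by nlinarith
          have haux2 : τb ≤ (τ y : ℝ) * τb := by nlinarith
          rw [abs_le]
          constructor
          · -- k − m τb ≤ M + τ τb
            push_cast at hMb ⊢
            nlinarith [hMb.1, hMb.2]
          · push_cast at hMa ⊢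
            nlinarith [hMa.1, hMa.2]
        have heq : (m : ℝ) - (k : ℝ) / τb = ((m : ℝ) * τb - k) / τb := by
          field_simp
        rw [heq, abs_div, abs_of_pos hτbpos, div_le_iff₀ hτbpos]
        calc |(m : ℝ) * τb - k| ≤ M y + (τ y : ℝ) * τb := hkey
          _ ≤ (τb⁻¹ * M y + (τ y : ℝ)) * τb := by
            have : τb⁻¹ * τb = 1 := inv_mul_cancel₀ (ne_of_gt hτbpos)
            nlinarith [hM0 y]
      calc (∑ ℓ ∈ Finset.range (τ y),
            (Finset.Icc 1 n).sup' (Finset.nonempty_Icc.mpr hn)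
              (fun k => |(N k y ℓ : ℝ) - (k : ℝ) / τb|))
          ≤ ∑ _ℓ ∈ Finset.range (τ y), (τb⁻¹ * M y + (τ y : ℝ)) :=
            Finset.sum_le_sum hterm
        _ = (τ y : ℝ) * (τb⁻¹ * M y + (τ y : ℝ)) := by
            rw [Finset.sum_const, Finset.card_range, nsmul_eq_mul]
        _ ≤ τb⁻¹ * ((τ y : ℝ) * M y) + 2 * (τ y : ℝ) ^ 2 := by nlinarith [hM0 y]
    · -- n < τ y : trivial bound
      have hterm : ∀ ℓ ∈ Finset.range (τ y),
          (Finset.Icc 1 n).sup' (Finset.nonempty_Icc.mpr hn)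
            (fun k => |(N k y ℓ : ℝ) - (k : ℝ) / τb|) ≤ 2 * (τ y : ℝ) := by
        intro ℓ hℓ
        rw [Finset.mem_range] at hℓ
        apply Finset.sup'_le
        intro k hk
        rw [Finset.mem_Icc] at hk
        obtain ⟨h1, _⟩ := hN k hk.1 y ℓ hℓ
        set m := N k y ℓ with hmdef
        have hmle : m ≤ k + ℓ := by
          calc m = ∑ _j ∈ Finset.range m, 1 := by simp
            _ ≤ ∑ j ∈ Finset.range m, τ (F^[j] y) := Finset.sum_le_sum fun j _ => hτ1 _
            _ ≤ k + ℓ := h1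
        have hmR : (m : ℝ) ≤ (k : ℝ) + ℓ := by exact_mod_cast hmle
        have hkR : (k : ℝ) ≤ (n : ℝ) := by exact_mod_cast hk.2
        have hnR : (n : ℝ) + 1 ≤ (τ y : ℝ) := by exact_mod_cast hcase
        have hℓR : (ℓ : ℝ) + 1 ≤ (τ y : ℝ) := by exact_mod_cast hℓ
        have hdiv0 : 0 ≤ (k : ℝ) / τb := by positivity
        have hdiv1 : (k : ℝ) / τb ≤ (k : ℝ) := by
          apply div_le_self (by positivity) hτb1
        rw [abs_le]
        constructor <;> nlinarith
      calc (∑ ℓ ∈ Finset.range (τ y),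
            (Finset.Icc 1 n).sup' (Finset.nonempty_Icc.mpr hn)
              (fun k => |(N k y ℓ : ℝ) - (k : ℝ) / τb|))
          ≤ ∑ _ℓ ∈ Finset.range (τ y), (2 * (τ y : ℝ)) := Finset.sum_le_sum hterm
        _ = 2 * (τ y : ℝ) ^ 2 := by
            rw [Finset.sum_const, Finset.card_range, nsmul_eq_mul]; ring
        _ ≤ τb⁻¹ * ((τ y : ℝ) * M y) + 2 * (τ y : ℝ) ^ 2 := by
            have h0 : 0 ≤ τb⁻¹ * ((τ y : ℝ) * M y) :=
              mul_nonneg hτbinv0 (mul_nonneg (Nat.cast_nonneg _) (hM0 y))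
            linarith
  -- pass to ℝ≥0∞
  have hptE : ∀ y,
      ENNReal.ofReal (∑ ℓ ∈ Finset.range (τ y),
        (Finset.Icc 1 n).sup' (Finset.nonempty_Icc.mpr hn)
          (fun k => |(N k y ℓ : ℝ) - (k : ℝ) / τb|))
      ≤ ENNReal.ofReal τb⁻¹ * (ENNReal.ofReal (τ y : ℝ) * ENNReal.ofReal (M y))
          + 2 * ((τ y : ℝ≥0∞)) ^ 2 := by
    intro y
    calc ENNReal.ofReal (∑ ℓ ∈ Finset.range (τ y),
            (Finset.Icc 1 n).sup' (Finset.nonempty_Icc.mpr hn)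
              (fun k => |(N k y ℓ : ℝ) - (k : ℝ) / τb|))
        ≤ ENNReal.ofReal (τb⁻¹ * ((τ y : ℝ) * M y) + 2 * (τ y : ℝ) ^ 2) :=
          ENNReal.ofReal_le_ofReal (hpt y)
      _ = ENNReal.ofReal τb⁻¹ * (ENNReal.ofReal (τ y : ℝ) * ENNReal.ofReal (M y))
            + 2 * ((τ y : ℝ≥0∞)) ^ 2 := by
          rw [ENNReal.ofReal_add
              (mul_nonneg hτbinv0 (mul_nonneg (Nat.cast_nonneg _) (hM0 y))) (by positivity),
            ENNReal.ofReal_mul hτbinv0, ENNReal.ofReal_mul (Nat.cast_nonneg _),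
            ENNReal.ofReal_mul (by norm_num : (0:ℝ) ≤ 2), ENNReal.ofReal_pow (Nat.cast_nonneg _),
            ENNReal.ofReal_natCast, ENNReal.ofReal_ofNat]
  -- measurable ℝ≥0∞-valued functions
  have hfm : Measurable fun y => ENNReal.ofReal (τ y : ℝ) :=
    ENNReal.measurable_ofReal.comp (measurable_from_top.comp hτm)
  have hτEm : Measurable fun y => ((τ y : ℝ≥0∞)) := measurable_from_top.comp hτm
  have hsqm : Measurable fun y => ((τ y : ℝ≥0∞)) ^ 2 := hτEm.pow_const 2
  have hgm : Measurable fun y => ENNReal.ofReal (M y) :=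
    ENNReal.measurable_ofReal.comp hMm
  -- Cauchy–Schwarz
  have hCS : ∫⁻ y, ENNReal.ofReal (τ y : ℝ) * ENNReal.ofReal (M y) ∂μY
      ≤ ENNReal.ofReal (Real.sqrt A) * ENNReal.ofReal (C₀ * (Real.sqrt 2 * Real.sqrt n)) := by
    have h2n : 1 ≤ 2 * n := by omega
    have hMint : ∫⁻ y, (ENNReal.ofReal (M y)) ^ (2:ℝ) ∂μY
        ≤ ENNReal.ofReal (C₀ ^ 2 * (2 * n : ℕ)) := by
      have := hL2 (2 * n) h2n
      calc ∫⁻ y, (ENNReal.ofReal (M y)) ^ (2:ℝ) ∂μY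
          = ∫⁻ y, ENNReal.ofReal ((M y) ^ 2) ∂μY := by
            refine lintegral_congr fun y => ?_
            rw [show ((2:ℝ)) = ((2:ℕ):ℝ) by norm_num, ENNReal.rpow_natCast,
              ← ENNReal.ofReal_pow (hM0 y)]
        _ ≤ ENNReal.ofReal (C₀ ^ 2 * (2 * n : ℕ)) := this
    have hτint2 : ∫⁻ y, (ENNReal.ofReal (τ y : ℝ)) ^ (2:ℝ) ∂μY = ENNReal.ofReal A := by
      rw [← hA]
      refine lintegral_congr fun y => ?_
      rw [ENNReal.ofReal_natCast, show ((2:ℝ)) = ((2:ℕ):ℝ) by norm_num,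
        ENNReal.rpow_natCast]
    calc ∫⁻ y, ENNReal.ofReal (τ y : ℝ) * ENNReal.ofReal (M y) ∂μY
        = ∫⁻ y, ((fun y => ENNReal.ofReal (τ y : ℝ)) * (fun y => ENNReal.ofReal (M y))) y ∂μY := by
          simp [Pi.mul_apply]
      _ ≤ (∫⁻ y, (ENNReal.ofReal (τ y : ℝ)) ^ (2:ℝ) ∂μY) ^ (1/(2:ℝ)) *
            (∫⁻ y, (ENNReal.ofReal (M y)) ^ (2:ℝ) ∂μY) ^ (1/(2:ℝ)) :=
          ENNReal.lintegral_mul_le_Lp_mul_Lq μY ⟨by norm_num, by norm_num, by norm_num⟩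
            hfm.aemeasurable hgm.aemeasurable
      _ ≤ (ENNReal.ofReal A) ^ (1/(2:ℝ)) * (ENNReal.ofReal (C₀ ^ 2 * (2 * n : ℕ))) ^ (1/(2:ℝ)) := by
          rw [hτint2]
          exact mul_le_mul_right (ENNReal.rpow_le_rpow hMint (by norm_num)) _
      _ = ENNReal.ofReal (Real.sqrt A) * ENNReal.ofReal (C₀ * (Real.sqrt 2 * Real.sqrt n)) := by
          rw [ENNReal.ofReal_rpow_of_nonneg hA0 (by norm_num),
            ENNReal.ofReal_rpow_of_nonneg (by positivity) (by norm_num),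
            ← Real.sqrt_eq_rpow, ← Real.sqrt_eq_rpow]
          congr 2
          rw [show ((2 * n : ℕ) : ℝ) = 2 * (n : ℝ) by push_cast; ring]
          rw [Real.sqrt_mul (by positivity), Real.sqrt_mul (by norm_num),
            Real.sqrt_sq hC₀.le]
  -- put it together
  have hbound : ∫⁻ y, ENNReal.ofReal (∑ ℓ ∈ Finset.range (τ y),
        (Finset.Icc 1 n).sup' (Finset.nonempty_Icc.mpr hn)
          (fun k => |(N k y ℓ : ℝ) - (k : ℝ) / τb|)) ∂μY
      ≤ ENNReal.ofReal ((Real.sqrt A * (C₀ * Real.sqrt 2) + 2 * A + 1) * Real.sqrt n) := by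
    have hsqrtn1 : 1 ≤ Real.sqrt n := by
      rw [show (1:ℝ) = Real.sqrt 1 by simp]
      exact Real.sqrt_le_sqrt (by exact_mod_cast hn)
    calc ∫⁻ y, ENNReal.ofReal (∑ ℓ ∈ Finset.range (τ y),
            (Finset.Icc 1 n).sup' (Finset.nonempty_Icc.mpr hn)
              (fun k => |(N k y ℓ : ℝ) - (k : ℝ) / τb|)) ∂μY
        ≤ ∫⁻ y, (ENNReal.ofReal τb⁻¹ * (ENNReal.ofReal (τ y : ℝ) * ENNReal.ofReal (M y))
            + 2 * ((τ y : ℝ≥0∞)) ^ 2) ∂μY := lintegral_mono hptE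
      _ = ENNReal.ofReal τb⁻¹ * ∫⁻ y, ENNReal.ofReal (τ y : ℝ) * ENNReal.ofReal (M y) ∂μY
            + 2 * ∫⁻ y, ((τ y : ℝ≥0∞)) ^ 2 ∂μY := by
          rw [lintegral_add_left (f := fun y =>
              ENNReal.ofReal τb⁻¹ * (ENNReal.ofReal (τ y : ℝ) * ENNReal.ofReal (M y)))
              (((hfm.mul hgm).const_mul _)),
            lintegral_const_mul _ (f := fun y =>
              ENNReal.ofReal (τ y : ℝ) * ENNReal.ofReal (M y)) (hfm.mul hgm),
            lintegral_const_mul _ hsqm]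
      _ ≤ 1 * (ENNReal.ofReal (Real.sqrt A) * ENNReal.ofReal (C₀ * (Real.sqrt 2 * Real.sqrt n)))
            + 2 * ENNReal.ofReal A := by
          rw [hA]
          gcongr
          exact ENNReal.ofReal_le_one.mpr hτbinv
      _ = ENNReal.ofReal (Real.sqrt A * (C₀ * (Real.sqrt 2 * Real.sqrt n)) + 2 * A) := by
          rw [one_mul, ← ENNReal.ofReal_mul (by positivity),
            show ((2:ℝ≥0∞)) = ENNReal.ofReal (2:ℝ) by norm_num,
            ← ENNReal.ofReal_mul (by norm_num),
            ← ENNReal.ofReal_add (by positivity) (by positivity)]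
      _ ≤ ENNReal.ofReal ((Real.sqrt A * (C₀ * Real.sqrt 2) + 2 * A + 1) * Real.sqrt n) := by
          apply ENNReal.ofReal_le_ofReal
          nlinarith [Real.sqrt_nonneg A, Real.sqrt_nonneg 2, Real.sqrt_nonneg (n:ℝ), hA0,
            hC₀.le, mul_nonneg (Real.sqrt_nonneg A) (mul_nonneg hC₀.le (Real.sqrt_nonneg 2))]
  calc ENNReal.ofReal τb⁻¹ * (∫⁻ y, ENNReal.ofReal (∑ ℓ ∈ Finset.range (τ y),
          (Finset.Icc 1 n).sup' (Finset.nonempty_Icc.mpr hn)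
            (fun k => |(N k y ℓ : ℝ) - (k : ℝ) / τb|)) ∂μY)
      ≤ 1 * (∫⁻ y, ENNReal.ofReal (∑ ℓ ∈ Finset.range (τ y),
          (Finset.Icc 1 n).sup' (Finset.nonempty_Icc.mpr hn)
            (fun k => |(N k y ℓ : ℝ) - (k : ℝ) / τb|)) ∂μY) :=
        mul_le_mul_left (ENNReal.ofReal_le_one.mpr hτbinv) _
    _ = _ := one_mul _
    _ ≤ ENNReal.ofReal ((Real.sqrt A * (C₀ * Real.sqrt 2) + 2 * A + 1) * Real.sqrt n) := hbound
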